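/- Fix p ∈ (1,∞) and z > 1. The function G_z : ℝ² → ℝ is strictly convex: for all f, g ∈ ℝ² with f ≠ g and all θ ∈ (0,1), G_z(θf + (1−θ)g) < θ G_z(f) + (1−θ) G_z(g). In particular G_z has at most one global minimizer. -/

import Mathlib

/-- The `L(p,1)` loss of the aggregate scores `(f₁, f₂)` for two papers whose three
reviewers give overall recommendations `(z, 0, 0)` and `(0, 1, 0)` respectively. -/
noncomputable def G (p z : ℝ) (f : ℝ × ℝ) : ℝ :=
  (|z - f.1| ^ p + |f.2| ^ p) ^ (1 / p) +
    (|f.1| ^ p + |1 - f.2| ^ p) ^ (1 / p) +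
    (|f.1| ^ p + |f.2| ^ p) ^ (1 / p)

/-- The `ℓ^p` norm on `ℝ × ℝ`. -/
noncomputable def Np (p : ℝ) (u : ℝ × ℝ) : ℝ := (|u.1| ^ p + |u.2| ^ p) ^ (1 / p)

/-- Two vectors lie on a common ray from the origin. -/
def Ray (u v : ℝ × ℝ) : Prop := u = 0 ∨ v = 0 ∨ ∃ r s : ℝ, 0 < r ∧ 0 < s ∧ r • u = s • v

section aux
variable {p : ℝ} (hp : 1 < p)
include hp

lemma scalar_strict {l a b : ℝ} (hl : 0 < l) (hl' : l < 1) (hab : a ≠ b) :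
    |l * a + (1 - l) * b| ^ p < l * |a| ^ p + (1 - l) * |b| ^ p := by
  have hp0 : (0:ℝ) < p := by linarith
  have habs : |l * a + (1 - l) * b| ≤ l * |a| + (1 - l) * |b| := by
    calc |l * a + (1 - l) * b| ≤ |l * a| + |(1 - l) * b| := abs_add_le _ _
    _ = l * |a| + (1 - l) * |b| := by
        rw [abs_mul, abs_mul, abs_of_pos hl, abs_of_pos (by linarith : (0:ℝ) < 1 - l)]
  by_cases h : |a| = |b|
  · have hb0 : b ≠ 0 := by
      intro hb
      rw [hb] at h hab
      rw [abs_zero, abs_eq_zero] at h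
      exact hab h
    have ha : a = -b := by
      rcases abs_eq_abs.1 h with h1 | h1
      · exact absurd h1 hab
      · exact h1
    have h1 : |l * a + (1 - l) * b| = |2*l - 1| * |b| := by
      have : l * a + (1 - l) * b = (1 - 2*l) * b := by rw [ha]; ring
      rw [this, abs_mul]
      congr 1
      rw [abs_sub_comm]
    have h2 : |2*l - 1| < 1 := abs_lt.2 ⟨by linarith, by linarith⟩
    have h3 : |l * a + (1 - l) * b| < |b| := by
      rw [h1]
      calc |2*l-1| * |b| < 1 * |b| := mul_lt_mul_of_pos_right h2 (abs_pos.2 hb0)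
      _ = |b| := one_mul _
    calc |l * a + (1 - l) * b| ^ p < |b| ^ p :=
          Real.rpow_lt_rpow (abs_nonneg _) h3 hp0
    _ = l * |b| ^ p + (1 - l) * |b| ^ p := by ring
    _ = l * |a| ^ p + (1 - l) * |b| ^ p := by rw [ha, abs_neg]
  · have key := (strictConvexOn_rpow hp).2 (Set.mem_Ici.2 (abs_nonneg a))
      (Set.mem_Ici.2 (abs_nonneg b)) h hl (by linarith : (0:ℝ) < 1 - l) (by ring)
    calc |l * a + (1 - l) * b| ^ p ≤ (l * |a| + (1 - l) * |b|) ^ p :=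
          Real.rpow_le_rpow (abs_nonneg _) habs hp0.le
    _ < l * |a| ^ p + (1 - l) * |b| ^ p := by simpa [smul_eq_mul] using key

lemma scalar_le {l a b : ℝ} (hl : 0 < l) (hl' : l < 1) :
    |l * a + (1 - l) * b| ^ p ≤ l * |a| ^ p + (1 - l) * |b| ^ p := by
  by_cases hab : a = b
  · subst hab
    have h1 : l * a + (1 - l) * a = a := by ring
    rw [h1]
    have : l * |a| ^ p + (1 - l) * |a| ^ p = |a| ^ p := by ring
    rw [this]
  · exact (scalar_strict hp hl hl' hab).le

lemma F_eq_one {x : ℝ × ℝ} (hx : Np p x = 1) : |x.1| ^ p + |x.2| ^ p = 1 := by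
  have hp0 : p ≠ 0 := by positivity
  have hF : (0:ℝ) ≤ |x.1| ^ p + |x.2| ^ p := by positivity
  have h1 : ((|x.1| ^ p + |x.2| ^ p) ^ (1/p)) ^ p = 1 := by
    rw [Np] at hx; rw [hx]; exact Real.one_rpow p
  rwa [← Real.rpow_mul hF, one_div, inv_mul_cancel₀ hp0, Real.rpow_one] at h1

omit hp in
lemma Np_nonneg (u : ℝ × ℝ) : 0 ≤ Np p u := Real.rpow_nonneg (by positivity) _

lemma Np_pos {u : ℝ × ℝ} (hu : u ≠ 0) : 0 < Np p u := by
  have hp0 : (0:ℝ) < p := by linarith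
  have : (0:ℝ) < |u.1| ^ p + |u.2| ^ p := by
    rcases Prod.mk.injEq u.1 u.2 0 0 ▸ (fun h => hu (Prod.ext_iff.2 h)) with _
    by_cases h1 : u.1 = 0
    · have h2 : u.2 ≠ 0 := by
        intro h2; exact hu (Prod.ext_iff.2 ⟨h1, h2⟩)
      have : (0:ℝ) < |u.2| ^ p := Real.rpow_pos_of_pos (abs_pos.2 h2) p
      positivity
    · have : (0:ℝ) < |u.1| ^ p := Real.rpow_pos_of_pos (abs_pos.2 h1) p
      positivity
  exact Real.rpow_pos_of_pos this _

lemma Np_smul {c : ℝ} (hc : 0 ≤ c) (u : ℝ × ℝ) : Np p (c • u) = c * Np p u := by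
  have hp0 : p ≠ 0 := by positivity
  have hcp : (0:ℝ) ≤ c ^ p := Real.rpow_nonneg hc p
  have hF : (0:ℝ) ≤ |u.1| ^ p + |u.2| ^ p := by positivity
  simp only [Np, Prod.smul_fst, Prod.smul_snd, smul_eq_mul]
  rw [abs_mul, abs_mul, abs_of_nonneg hc, Real.mul_rpow hc (abs_nonneg _),
    Real.mul_rpow hc (abs_nonneg _), ← mul_add, Real.mul_rpow hcp hF,
    ← Real.rpow_mul hc, mul_one_div, div_self hp0, Real.rpow_one]

lemma Np_unit_lt {x y : ℝ × ℝ} (hx : Np p x = 1) (hy : Np p y = 1) (hxy : x ≠ y)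
    {l : ℝ} (hl : 0 < l) (hl' : l < 1) : Np p (l • x + (1 - l) • y) < 1 := by
  have hFx := F_eq_one hp hx
  have hFy := F_eq_one hp hy
  have hF : |l * x.1 + (1 - l) * y.1| ^ p + |l * x.2 + (1 - l) * y.2| ^ p < 1 := by
    have hcoord : x.1 ≠ y.1 ∨ x.2 ≠ y.2 := by
      by_contra h
      push_neg at h
      exact hxy (Prod.ext_iff.2 ⟨h.1, h.2⟩)
    rcases hcoord with h | h
    · have h1 := scalar_strict hp hl hl' h
      have h2 := scalar_le (a := x.2) (b := y.2) hp hl hl'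
      nlinarith
    · have h1 := scalar_le (a := x.1) (b := y.1) hp hl hl'
      have h2 := scalar_strict hp hl hl' h
      nlinarith
  have harg : Np p (l • x + (1 - l) • y)
      = (|l * x.1 + (1 - l) * y.1| ^ p + |l * x.2 + (1 - l) * y.2| ^ p) ^ (1/p) := by
    simp [Np, Prod.smul_fst, Prod.smul_snd, smul_eq_mul]
  rw [harg]
  exact Real.rpow_lt_one (by positivity) hF (by positivity)

lemma Np_combo_lt {x y : ℝ × ℝ} (hx : Np p x = 1) (hy : Np p y = 1) (hxy : x ≠ y)
    {s t : ℝ} (hs : 0 < s) (ht : 0 < t) : Np p (s • x + t • y) < s + t := by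
  have hc0 : 0 < s + t := by linarith
  have hcne : s + t ≠ 0 := hc0.ne'
  have hl0 : 0 < s / (s + t) := by positivity
  have hl1 : s / (s + t) < 1 := by rw [div_lt_one hc0]; linarith
  have e1 : (s + t) * (s / (s + t)) = s := by field_simp
  have e2 : (s + t) * (1 - s / (s + t)) = t := by rw [mul_sub, mul_one, e1]; ring
  have harg : s • x + t • y
      = (s + t) • ((s / (s + t)) • x + (1 - s / (s + t)) • y) := by
    rw [smul_add, smul_smul, smul_smul, e1, e2]
  rw [harg, Np_smul hp hc0.le]
  calc (s + t) * Np p ((s / (s + t)) • x + (1 - s / (s + t)) • y) < (s + t) * 1 :=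
        mul_lt_mul_of_pos_left (Np_unit_lt hp hx hy hxy hl0 hl1) hc0
  _ = s + t := mul_one _

lemma Np_strict {u v : ℝ × ℝ} (h : ¬ Ray u v) {θ : ℝ} (hθ : 0 < θ) (hθ1 : θ < 1) :
    Np p (θ • u + (1 - θ) • v) < θ * Np p u + (1 - θ) * Np p v := by
  have hu : u ≠ 0 := fun h' => h (Or.inl h')
  have hv : v ≠ 0 := fun h' => h (Or.inr (Or.inl h'))
  have ha0 : 0 < Np p u := Np_pos hp hu
  have hb0 : 0 < Np p v := Np_pos hp hv
  have hx : Np p ((Np p u)⁻¹ • u) = 1 := by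
    rw [Np_smul hp (by positivity) u, inv_mul_cancel₀ ha0.ne']
  have hy : Np p ((Np p v)⁻¹ • v) = 1 := by
    rw [Np_smul hp (by positivity) v, inv_mul_cancel₀ hb0.ne']
  have hxy : (Np p u)⁻¹ • u ≠ (Np p v)⁻¹ • v := by
    intro hxy
    exact h (Or.inr (Or.inr ⟨(Np p u)⁻¹, (Np p v)⁻¹, by positivity, by positivity, hxy⟩))
  have key := Np_combo_lt hp hx hy hxy (s := θ * Np p u) (t := (1 - θ) * Np p v)
    (by positivity) (by
      have h1t : 0 < 1 - θ := by linarith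
      positivity)
  have e1 : (θ * Np p u) • ((Np p u)⁻¹ • u) = θ • u := by
    rw [smul_smul, mul_assoc, mul_inv_cancel₀ ha0.ne', mul_one]
  have e2 : ((1 - θ) * Np p v) • ((Np p v)⁻¹ • v) = (1 - θ) • v := by
    rw [smul_smul, mul_assoc, mul_inv_cancel₀ hb0.ne', mul_one]
  rwa [e1, e2] at key

lemma Np_convex (u v : ℝ × ℝ) {θ : ℝ} (hθ : 0 < θ) (hθ1 : θ < 1) :
    Np p (θ • u + (1 - θ) • v) ≤ θ * Np p u + (1 - θ) * Np p v := by
  by_cases h : Ray u v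
  · rcases h with h | h | ⟨r, s, hr, hs, hrs⟩
    · subst h
      rw [smul_zero, zero_add, Np_smul hp (by linarith : (0:ℝ) ≤ 1 - θ)]
      have : 0 ≤ θ * Np p (0 : ℝ × ℝ) := mul_nonneg hθ.le (Np_nonneg _)
      linarith
    · subst h
      rw [smul_zero, add_zero, Np_smul hp hθ.le]
      have : 0 ≤ (1 - θ) * Np p (0 : ℝ × ℝ) :=
        mul_nonneg (by linarith) (Np_nonneg _)
      linarith
    · have hv : v = (r / s) • u := by
        have : s⁻¹ • (r • u) = s⁻¹ • (s • v) := by rw [hrs]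
        rw [smul_smul, smul_smul, inv_mul_cancel₀ hs.ne', one_smul] at this
        rw [← this, div_eq_inv_mul]
      have hk0 : 0 ≤ r / s := by positivity
      have hNv : Np p v = (r / s) * Np p u := by rw [hv, Np_smul hp hk0]
      have harg : θ • u + (1 - θ) • v = (θ + (1 - θ) * (r / s)) • u := by
        rw [hv, smul_smul, ← add_smul]
      have hcoef : 0 ≤ θ + (1 - θ) * (r / s) := by
        have h1 : 0 ≤ (1 - θ) * (r / s) := mul_nonneg (by linarith) hk0
        linarith
      rw [harg, Np_smul hp hcoef, hNv]
      ring_nf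
      exact le_refl _
  · exact (Np_strict hp h hθ hθ1).le

omit hp in
lemma Ray_cross {u v : ℝ × ℝ} (h : Ray u v) : u.1 * v.2 = u.2 * v.1 := by
  rcases h with h | h | ⟨r, s, hr, hs, hrs⟩
  · rw [h]; simp
  · rw [h]; simp
  · have h1 : r * u.1 = s * v.1 := congrArg Prod.fst hrs
    have h2 : r * u.2 = s * v.2 := congrArg Prod.snd hrs
    have : r * (u.1 * v.2) = r * (u.2 * v.1) := by linear_combination v.2 * h1 - v.1 * h2
    exact mul_left_cancel₀ hr.ne' this

omit hp in
lemma G_eq (p z : ℝ) (f : ℝ × ℝ) :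
    G p z f = Np p (z - f.1, f.2) + Np p (f.1, 1 - f.2) + Np p (f.1, f.2) := rfl

end aux

/-- For `p ∈ (1,∞)` and `z > 1`, the function `G_z` is strictly convex; in particular it
has at most one global minimizer. -/
theorem stmt_1 (p : ℝ) (hp : 1 < p) (z : ℝ) (hz : 1 < z) :
    (∀ f g : ℝ × ℝ, f ≠ g → ∀ θ : ℝ, 0 < θ → θ < 1 →
      G p z (θ • f + (1 - θ) • g) < θ * G p z f + (1 - θ) * G p z g) ∧
    (∀ f g : ℝ × ℝ, (∀ h : ℝ × ℝ, G p z f ≤ G p z h) →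
      (∀ h : ℝ × ℝ, G p z g ≤ G p z h) → f = g) := by
  have main : ∀ f g : ℝ × ℝ, f ≠ g → ∀ θ : ℝ, 0 < θ → θ < 1 →
      G p z (θ • f + (1 - θ) • g) < θ * G p z f + (1 - θ) * G p z g := by
    intro f g hfg θ hθ hθ1
    set u₁ : ℝ × ℝ := (z - f.1, f.2) with hu₁
    set v₁ : ℝ × ℝ := (z - g.1, g.2) with hv₁
    set u₂ : ℝ × ℝ := (f.1, 1 - f.2) with hu₂
    set v₂ : ℝ × ℝ := (g.1, 1 - g.2) with hv₂
    set u₃ : ℝ × ℝ := (f.1, f.2) with hu₃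
    set v₃ : ℝ × ℝ := (g.1, g.2) with hv₃
    have hkey : ¬ (Ray u₁ v₁ ∧ Ray u₂ v₂ ∧ Ray u₃ v₃) := by
      rintro ⟨h1, h2, h3⟩
      have c1 := Ray_cross h1
      have c2 := Ray_cross h2
      have c3 := Ray_cross h3
      simp only [hu₁, hv₁, hu₂, hv₂, hu₃, hv₃] at c1 c2 c3
      have hz0 : z ≠ 0 := by linarith
      have h22 : f.2 = g.2 := by
        have hzz : z * f.2 = z * g.2 := by nlinarith
        exact mul_left_cancel₀ hz0 hzz
      have h11 : f.1 = g.1 := by nlinarith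
      exact hfg (Prod.ext_iff.2 ⟨h11, h22⟩)
    have harg1 : (z - (θ • f + (1 - θ) • g).1, (θ • f + (1 - θ) • g).2)
        = θ • u₁ + (1 - θ) • v₁ := by
      simp only [hu₁, hv₁, Prod.fst_add, Prod.snd_add, Prod.smul_fst, Prod.smul_snd,
        smul_eq_mul, Prod.mk_add_mk, Prod.smul_mk, Prod.mk.injEq]
      all_goals exact ⟨by ring, trivial⟩
    have harg2 : ((θ • f + (1 - θ) • g).1, 1 - (θ • f + (1 - θ) • g).2)
        = θ • u₂ + (1 - θ) • v₂ := by
      simp only [hu₂, hv₂, Prod.fst_add, Prod.snd_add, Prod.smul_fst, Prod.smul_snd,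
        smul_eq_mul, Prod.mk_add_mk, Prod.smul_mk, Prod.mk.injEq]
      all_goals exact ⟨trivial, by ring⟩
    have harg3 : ((θ • f + (1 - θ) • g).1, (θ • f + (1 - θ) • g).2)
        = θ • u₃ + (1 - θ) • v₃ := by
      simp only [hu₃, hv₃, Prod.fst_add, Prod.snd_add, Prod.smul_fst, Prod.smul_snd,
        smul_eq_mul, Prod.mk_add_mk, Prod.smul_mk, Prod.mk.injEq]
      all_goals constructor <;> ring
    have hG : G p z (θ • f + (1 - θ) • g)
        = Np p (θ • u₁ + (1 - θ) • v₁) + Np p (θ • u₂ + (1 - θ) • v₂)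
          + Np p (θ • u₃ + (1 - θ) • v₃) := by
      rw [G_eq, harg1, harg2, harg3]
    have hGf : G p z f = Np p u₁ + Np p u₂ + Np p u₃ := by rw [G_eq]
    have hGg : G p z g = Np p v₁ + Np p v₂ + Np p v₃ := by rw [G_eq]
    rw [hG, hGf, hGg]
    have le1 := Np_convex hp u₁ v₁ hθ hθ1
    have le2 := Np_convex hp u₂ v₂ hθ hθ1
    have le3 := Np_convex hp u₃ v₃ hθ hθ1
    by_cases hr1 : Ray u₁ v₁
    · by_cases hr2 : Ray u₂ v₂
      · have hr3 : ¬ Ray u₃ v₃ := fun hr3 => hkey ⟨hr1, hr2, hr3⟩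
        have := Np_strict hp hr3 hθ hθ1
        nlinarith
      · have := Np_strict hp hr2 hθ hθ1
        nlinarith
    · have := Np_strict hp hr1 hθ hθ1
      nlinarith
  refine ⟨main, ?_⟩
  intro f g hf hg
  by_contra hne
  have h1 := main f g hne (1/2) (by norm_num) (by norm_num)
  have h2 := hf ((1/2 : ℝ) • f + (1 - 1/2 : ℝ) • g)
  have h3 := hg f
  have h4 := hf g
  linarith
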